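/- If a nonempty finite set o is a canonical form, then o \ {max o} is also a canonical form (or ⊥ if the result is empty). -/

import Mathlib

/-- Objects built inductively from atoms by finite tuples and finite sets
(a set node carries the list of its elements). -/
inductive Obj (A : Type) : Type
  | atom : A → Obj A
  | tup  : List (Obj A) → Obj A
  | sett : List (Obj A) → Obj A

/-- Applying a map on atoms to an object, recursively. -/
def Obj.applyPerm {A : Type} (π : A → A) : Obj A → Obj A
  | .atom a => .atom (π a)
  | .tup l => .tup (l.attach.map (fun o => Obj.applyPerm π o.1))
  | .sett l => .sett (l.attach.map (fun o => Obj.applyPerm π o.1))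
decreasing_by all_goals (have := List.sizeOf_lt_of_mem o.2; simp at this ⊢; omega)

/-- The list of atoms occurring in an object. -/
def Obj.atomsList {A : Type} : Obj A → List A
  | .atom a => [a]
  | .tup l => l.attach.flatMap (fun o => Obj.atomsList o.1)
  | .sett l => l.attach.flatMap (fun o => Obj.atomsList o.1)
decreasing_by all_goals (have := List.sizeOf_lt_of_mem o.2; simp at this ⊢; omega)

/-- The set of atoms occurring in an object. -/
def Obj.atoms {A : Type} (o : Obj A) : Set A := {a | a ∈ o.atomsList}

/-- Well-formed objects: the element lists of set nodes are strictly sorted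
(so they faithfully represent finite sets, listed in increasing order). -/
def Obj.WF {A : Type} [LinearOrder (Obj A)] : Obj A → Prop
  | .atom _ => True
  | .tup l => ∀ o ∈ l, Obj.WF o
  | .sett l => l.Pairwise (· < ·) ∧ ∀ o ∈ l, Obj.WF o

/-- Applying a map on atoms to an object, recursively; the element list of a
set node is re-sorted, so that set nodes keep representing sets. -/
def Obj.applyPermS {A : Type} [LinearOrder (Obj A)] (π : A → A) : Obj A → Obj A
  | .atom a => .atom (π a)
  | .tup l => .tup (l.attach.map (fun o => Obj.applyPermS π o.1))
  | .sett l => .sett ((l.attach.map (fun o => Obj.applyPermS π o.1)).mergeSort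
      (fun a b => decide (a ≤ b)))
decreasing_by all_goals (have := List.sizeOf_lt_of_mem o.2; simp at this ⊢; omega)

section Aux

variable {A : Type} [LinearOrder (Obj A)]

lemma applyPermS_sett (π : A → A) (l : List (Obj A)) :
    Obj.applyPermS π (Obj.sett l) = Obj.sett ((l.map (Obj.applyPermS π)).mergeSort
      (fun a b => decide (a ≤ b))) := by
  rw [Obj.applyPermS, List.attach_map_val]

lemma applyPermS_tup (π : A → A) (l : List (Obj A)) :
    Obj.applyPermS π (Obj.tup l) = Obj.tup (l.map (Obj.applyPermS π)) := by
  rw [Obj.applyPermS, List.attach_map_val]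

lemma mergeSort_sorted_le (l : List (Obj A)) :
    (l.mergeSort (fun a b => decide (a ≤ b))).Pairwise (· ≤ ·) := by
  have := List.pairwise_mergeSort (le := fun a b : Obj A => decide (a ≤ b))
    (by intro a b c; simp; exact le_trans)
    (by intro a b; simp; exact le_total a b) l
  exact this.imp (by simp)

lemma sorted_lt_of_le_nodup {u : List (Obj A)} (h1 : u.Pairwise (· ≤ ·)) (h2 : u.Nodup) :
    u.Pairwise (· < ·) :=
  (h1.and h2).imp (fun h => lt_of_le_of_ne h.1 h.2)

lemma inv_applyPermS (π : Equiv.Perm A) :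
    ∀ o : Obj A, Obj.WF o → Obj.applyPermS (π.symm : A → A) (Obj.applyPermS (π : A → A) o) = o := by
  have key : ∀ n : ℕ, ∀ o : Obj A, sizeOf o ≤ n → Obj.WF o →
      Obj.applyPermS (π.symm : A → A) (Obj.applyPermS (π : A → A) o) = o := by
    intro n
    induction n with
    | zero => intro o h; cases o <;> simp at h
    | succ n ih =>
      intro o hle hwf
      match o with
      | .atom a => simp [Obj.applyPermS]
      | .tup l =>
        rw [Obj.WF] at hwf
        have hsz : ∀ o' ∈ l, sizeOf o' ≤ n := by
          intro o' ho'
          have := List.sizeOf_lt_of_mem ho'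
          simp at hle; omega
        rw [applyPermS_tup, applyPermS_tup, List.map_map]
        congr 1
        calc l.map (Obj.applyPermS (π.symm : A → A) ∘ Obj.applyPermS (π : A → A))
            = l.map id := List.map_congr_left (fun o' ho' => ih o' (hsz o' ho') (hwf o' ho'))
          _ = l := List.map_id l
      | .sett l =>
        rw [Obj.WF] at hwf
        have hsz : ∀ o' ∈ l, sizeOf o' ≤ n := by
          intro o' ho'
          have := List.sizeOf_lt_of_mem ho'
          simp at hle; omega
        rw [applyPermS_sett, applyPermS_sett]
        congr 1
        have hperm : List.Perm (((l.map (Obj.applyPermS (π : A → A))).mergeSort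
            (fun a b => decide (a ≤ b))).map (Obj.applyPermS (π.symm : A → A))) l := by
          refine ((List.mergeSort_perm _ _).map _).trans ?_
          rw [List.map_map]
          have hmap : l.map (Obj.applyPermS (π.symm : A → A) ∘ Obj.applyPermS (π : A → A)) = l :=
            (List.map_congr_left (fun o' ho' => ih o' (hsz o' ho') (hwf.2 o' ho'))).trans
              (List.map_id l)
          rw [hmap]
        haveI : IsAntisymm (Obj A) (· ≤ ·) := ⟨fun _ _ => le_antisymm⟩
        refine List.Perm.eq_of_pairwise' (r := (· ≤ ·)) ?_ ?_ ((List.mergeSort_perm _ _).trans hperm)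
        · exact mergeSort_sorted_le _
        · exact hwf.1.imp le_of_lt
  intro o hwf
  exact key (sizeOf o) o le_rfl hwf

lemma applyPermS_inj (π : Equiv.Perm A) {a b : Obj A} (ha : Obj.WF a) (hb : Obj.WF b)
    (h : Obj.applyPermS (π : A → A) a = Obj.applyPermS (π : A → A) b) : a = b := by
  rw [← inv_applyPermS π a ha, ← inv_applyPermS π b hb, h]

end Aux

lemma lexB {α : Type*} [LinearOrder α] (x x' : α) :
    ∀ (u l : List α), List.Lex (· < ·) u l → u.length = l.length →
    ∀ u' : List α, u'.Pairwise (· < ·) → List.Perm u' (u ++ [x']) →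
    List.Lex (· < ·) u' (l ++ [x]) := by
  intro u l h
  induction h with
  | nil => intro hlen; simp at hlen
  | @rel a u₁ b l₁ hab =>
    intro hlen u' hs hp
    match u' with
    | [] => simpa using hp.length_eq
    | c :: v =>
      have ha : a ∈ c :: v := hp.mem_iff.2 (by simp)
      have hca : c ≤ a := by
        rcases List.mem_cons.1 ha with h' | h'
        · exact le_of_eq h'.symm
        · exact ((List.pairwise_cons.1 hs).1 a h').le
      simp only [List.cons_append]
      exact List.Lex.rel (lt_of_le_of_lt hca hab)
  | @cons a u₁ l₁ h ih =>
    intro hlen u' hs hp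
    match u' with
    | [] => simpa using hp.length_eq
    | c :: v =>
      have ha : a ∈ c :: v := hp.mem_iff.2 (by simp)
      have hca : c ≤ a := by
        rcases List.mem_cons.1 ha with h' | h'
        · exact le_of_eq h'.symm
        · exact ((List.pairwise_cons.1 hs).1 a h').le
      rcases lt_or_eq_of_le hca with hlt | rfl
      · simp only [List.cons_append]
        exact List.Lex.rel hlt
      · have hv : List.Perm v (u₁ ++ [x']) := by
          have : List.Perm (c :: v) (c :: (u₁ ++ [x'])) := by simpa using hp
          exact this.cons_inv
        have hlen' : u₁.length = l₁.length := by simpa using hlen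
        have := ih hlen' v (List.pairwise_cons.1 hs).2 hv
        simp only [List.cons_append]
        exact List.Lex.cons this

/-- if a nonempty finite set (elements listed in increasing
order, so the last one is its maximum) is a canonical form, then the set
obtained by removing its maximum is too. -/
theorem parent_of_canonical_set {A : Type} [LinearOrder A] [LinearOrder (Obj A)] [WellFoundedLT (Obj A)]
    (hatom : ∀ a b : A, Obj.atom a < Obj.atom b ↔ a < b)
    (htup : ∀ l₁ l₂ : List (Obj A), l₁.length = l₂.length →
        (Obj.tup l₁ < Obj.tup l₂ ↔ List.Lex (· < ·) l₁ l₂))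
    (hsett : ∀ l₁ l₂ : List (Obj A), l₁.Pairwise (· < ·) → l₂.Pairwise (· < ·) →
        (Obj.sett l₁ < Obj.sett l₂ ↔ List.Lex (· < ·) l₁ l₂))
    (uset : A → Set A) (h1 : ∀ a, a ∈ uset a)
    (h2 : ∀ a b, uset a = uset b ∨ uset a ∩ uset b = ∅)
    (l : List (Obj A)) (x : Obj A) (hwf : (Obj.sett (l ++ [x])).WF)
    (hcan : ∀ π : Equiv.Perm A, (∀ a, π a ∈ uset a) →
      Obj.sett (l ++ [x]) ≤ (Obj.sett (l ++ [x])).applyPermS π) :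
    ∀ π : Equiv.Perm A, (∀ a, π a ∈ uset a) →
      Obj.sett l ≤ (Obj.sett l).applyPermS π := by
  intro π hπ
  rw [Obj.WF] at hwf
  obtain ⟨hsorted, hwfel⟩ := hwf
  have hl : l.Pairwise (· < ·) := hsorted.sublist (List.sublist_append_left l [x])
  by_contra hcon
  have hlt : (Obj.sett l).applyPermS π < Obj.sett l := not_le.1 hcon
  rw [show (Obj.sett l).applyPermS π = Obj.applyPermS (π : A → A) (Obj.sett l) from rfl,
    applyPermS_sett] at hlt
  set u : List (Obj A) := (l.map (Obj.applyPermS (π : A → A))).mergeSort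
    (fun a b => decide (a ≤ b)) with hu
  have hul : List.Perm u (l.map (Obj.applyPermS (π : A → A))) := List.mergeSort_perm _ _
  have hinj : ∀ a ∈ l ++ [x], ∀ b ∈ l ++ [x],
      Obj.applyPermS (π : A → A) a = Obj.applyPermS (π : A → A) b → a = b := by
    intro a ha b hb hab
    exact applyPermS_inj π (hwfel a ha) (hwfel b hb) hab
  have hnodupl : (l ++ [x]).Nodup := hsorted.nodup
  have hnodupu : u.Nodup := hul.nodup_iff.2 <|
    (hnodupl.sublist (List.sublist_append_left l [x])).map_on
      (fun a ha b hb => hinj a (by simp [ha]) b (by simp [hb]))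
  have husort : u.Pairwise (· < ·) := sorted_lt_of_le_nodup (mergeSort_sorted_le _) hnodupu
  have hlex : List.Lex (· < ·) u l := (hsett u l husort hl).1 hlt
  -- u' : the sorted image of l ++ [x]
  set u' : List (Obj A) := ((l ++ [x]).map (Obj.applyPermS (π : A → A))).mergeSort
    (fun a b => decide (a ≤ b)) with hu'
  have hu'p : List.Perm u' (u ++ [Obj.applyPermS (π : A → A) x]) := by
    refine (List.mergeSort_perm _ _).trans ?_
    rw [List.map_append]
    simpa using (hul.symm.append_right [Obj.applyPermS (π : A → A) x])
  have hnodupu' : u'.Nodup := (List.mergeSort_perm _ _).nodup_iff.2 (hnodupl.map_on hinj)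
  have hu'sort : u'.Pairwise (· < ·) := sorted_lt_of_le_nodup (mergeSort_sorted_le _) hnodupu'
  have hlen : u.length = l.length := by
    rw [hul.length_eq, List.length_map]
  have hlex' : List.Lex (· < ·) u' (l ++ [x]) :=
    lexB x (Obj.applyPermS (π : A → A) x) u l hlex hlen u' hu'sort hu'p
  have hlt' : (Obj.sett (l ++ [x])).applyPermS π < Obj.sett (l ++ [x]) := by
    rw [show (Obj.sett (l ++ [x])).applyPermS π
      = Obj.applyPermS (π : A → A) (Obj.sett (l ++ [x])) from rfl, applyPermS_sett]
    exact (hsett u' (l ++ [x]) hu'sort hsorted).2 hlex'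
  exact absurd (hcan π hπ) (not_le.2 hlt')
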